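/- Let Z be a standard normal random variable, let d ≥ 1, and let a₁, …, a_d ∈ ℝ. Then E[ min_{j=1,…,d} exp(a_j·Z − a_j²/2) ] = 2·(1 − Φ( (max_{j} a_j − min_{j} a_j)/2 )), where Φ denotes the cumulative distribution function of the standard normal distribution on ℝ. -/

import Mathlib

open MeasureTheory Filter Set Topology ProbabilityTheory Real

lemma gpdf_tilt (b x : ℝ) :
    gaussianPDFReal 0 1 x * rexp (b * x - b ^ 2 / 2) = gaussianPDFReal b 1 x := by
  simp only [gaussianPDFReal, NNReal.coe_one, mul_one, sub_zero]
  rw [mul_assoc, ← Real.exp_add]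
  congr 1
  ring

lemma gauss01_eq : gaussianReal 0 1
    = MeasureTheory.Measure.withDensity volume
        (fun x => ((gaussianPDFReal 0 1 x).toNNReal : ENNReal)) := by
  rw [gaussianReal_of_var_ne_zero 0 one_ne_zero]
  rfl

lemma tilt_integrable (b : ℝ) :
    Integrable (fun z => rexp (b * z - b ^ 2 / 2)) (gaussianReal 0 1) := by
  rw [gauss01_eq,
    integrable_withDensity_iff_integrable_smul
      (measurable_gaussianPDFReal 0 1).real_toNNReal]
  have : (fun x => (gaussianPDFReal 0 1 x).toNNReal • rexp (b * x - b ^ 2 / 2))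
      = gaussianPDFReal b 1 := by
    funext x
    rw [NNReal.smul_def, Real.coe_toNNReal _ (gaussianPDFReal_nonneg 0 1 x), smul_eq_mul, gpdf_tilt]
  rw [this]
  exact integrable_gaussianPDFReal b 1

lemma tilt_setIntegral (b : ℝ) {s : Set ℝ} (hs : MeasurableSet s) :
    ∫ z in s, rexp (b * z - b ^ 2 / 2) ∂(gaussianReal 0 1)
      = ((gaussianReal b 1) s).toReal := by
  rw [gauss01_eq, restrict_withDensity hs,
    integral_withDensity_eq_integral_smul
      (measurable_gaussianPDFReal 0 1).real_toNNReal]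
  have h : (fun x => (gaussianPDFReal 0 1 x).toNNReal • rexp (b * x - b ^ 2 / 2))
      = fun x => gaussianPDFReal b 1 x := by
    funext x
    rw [NNReal.smul_def, Real.coe_toNNReal _ (gaussianPDFReal_nonneg 0 1 x), smul_eq_mul, gpdf_tilt]
  rw [h]
  rw [gaussianReal_apply_eq_integral b one_ne_zero s, ENNReal.toReal_ofReal]
  exact integral_nonneg fun x => gaussianPDFReal_nonneg b 1 x

lemma gauss_shift (b c : ℝ) :
    (gaussianReal b 1) (Iic c) = (gaussianReal 0 1) (Iic (c - b)) := by
  have h := gaussianReal_map_add_const (μ := 0) (v := 1) b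
  rw [zero_add] at h
  rw [← h, Measure.map_apply (measurable_add_const b) measurableSet_Iic,
    Set.preimage_add_const_Iic]

lemma gauss_shift_Ioi (b c : ℝ) :
    (gaussianReal b 1) (Ioi c) = (gaussianReal 0 1) (Ioi (c - b)) := by
  have h := gaussianReal_map_add_const (μ := 0) (v := 1) b
  rw [zero_add] at h
  rw [← h, Measure.map_apply (measurable_add_const b) measurableSet_Ioi,
    Set.preimage_add_const_Ioi]

lemma gauss_noAtoms : NoAtoms (gaussianReal 0 1) := by
  constructor
  intro x
  rw [gaussianReal_apply 0 one_ne_zero, setLIntegral_measure_zero _ _ (measure_singleton x)]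

lemma gauss_symm (t : ℝ) :
    (gaussianReal 0 1) (Iic (-t)) = (gaussianReal 0 1) (Ioi t) := by
  have hmap : (gaussianReal 0 1).map (fun x : ℝ => -x) = gaussianReal 0 1 := by
    have h := gaussianReal_map_const_mul (μ := 0) (v := 1) (-1)
    have h1 : (⟨(-1 : ℝ) ^ 2, sq_nonneg _⟩ : NNReal) * 1 = 1 := by
      ext; norm_num
    have h2 : (fun x : ℝ => (-1) * x) = fun x : ℝ => -x := by
      funext x; ring
    rw [mul_zero, h2] at h
    convert h using 2; ext; norm_num
  have hpre : (fun x : ℝ => -x) ⁻¹' (Iic (-t)) = Ici t := by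
    ext z
    simp
  calc (gaussianReal 0 1) (Iic (-t))
      = ((gaussianReal 0 1).map (fun x : ℝ => -x)) (Iic (-t)) := by rw [hmap]
    _ = (gaussianReal 0 1) (Ici t) := by
        rw [Measure.map_apply measurable_neg measurableSet_Iic, hpre]
    _ = (gaussianReal 0 1) (Ioi t) := by
        haveI : NullSingletonClass (gaussianReal 0 1) := gauss_noAtoms
        exact (measure_congr Ioi_ae_eq_Ici).symm

lemma gauss_split (t : ℝ) :
    ((gaussianReal 0 1) (Iic t)).toReal + ((gaussianReal 0 1) (Ioi t)).toReal = 1 := by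
  have h := measure_add_measure_compl (μ := gaussianReal 0 1) (measurableSet_Iic (a := t))
  rw [compl_Iic, measure_univ] at h
  have := congrArg ENNReal.toReal h
  rwa [ENNReal.toReal_add (measure_ne_top _ _) (measure_ne_top _ _), ENNReal.toReal_one] at this

/-- The tail dependence coefficient of the one-dimensional Smith model:
`E[min_j exp(aⱼZ − aⱼ²/2)] = 2(1 − Φ((max a − min a)/2))`. -/
theorem empirical_tail_copulas_stmt17
    {Ω : Type*} [MeasurableSpace Ω] (P : Measure Ω) [IsProbabilityMeasure P]
    (Z : Ω → ℝ) (hZmeas : Measurable Z)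
    (hZ : Measure.map Z P = gaussianReal 0 1)
    (d : ℕ) (hd : 1 ≤ d) (a : Fin d → ℝ) :
    ∫ ω, ⨅ j, Real.exp (a j * Z ω - a j ^ 2 / 2) ∂P
      = 2 * (1 - ((gaussianReal 0 1)
          (Iic (((⨆ j, a j) - ⨅ j, a j) / 2))).toReal) := by
  haveI : Nonempty (Fin d) := Fin.pos_iff_nonempty.mp hd
  set m : ℝ := ⨅ j, a j with hm
  set M : ℝ := ⨆ j, a j with hM
  obtain ⟨jM, hjM⟩ := Finite.exists_max a
  obtain ⟨jm, hjm⟩ := Finite.exists_min a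
  have hMeq : M = a jM := le_antisymm (ciSup_le hjM) (le_ciSup (Finite.bddAbove_range a) jM)
  have hmeq : m = a jm := le_antisymm (ciInf_le (Finite.bddBelow_range a) jm)
    (le_ciInf hjm)
  have hma : ∀ j, m ≤ a j := fun j => hmeq ▸ hjm j
  have haM : ∀ j, a j ≤ M := fun j => hMeq ▸ hjM j
  have hmM : m ≤ M := le_trans (hma jm) (haM jm)
  set F : ℝ → ℝ := fun z => min (rexp (m * z - m ^ 2 / 2)) (rexp (M * z - M ^ 2 / 2)) with hF
  -- pointwise identification of the infimum
  have key : ∀ z : ℝ, (⨅ j, rexp (a j * z - a j ^ 2 / 2)) = F z := by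
    intro z
    refine le_antisymm (le_min ?_ ?_) (le_ciInf fun j => ?_)
    · calc (⨅ j, rexp (a j * z - a j ^ 2 / 2)) ≤ rexp (a jm * z - a jm ^ 2 / 2) :=
          ciInf_le (Finite.bddBelow_range _) jm
        _ = rexp (m * z - m ^ 2 / 2) := by rw [hmeq]
    · calc (⨅ j, rexp (a j * z - a j ^ 2 / 2)) ≤ rexp (a jM * z - a jM ^ 2 / 2) :=
          ciInf_le (Finite.bddBelow_range _) jM
        _ = rexp (M * z - M ^ 2 / 2) := by rw [hMeq]
    · rw [hF]
      rcases le_total ((a j + m) / 2) z with hz | hz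
      · refine le_trans (min_le_left _ _) (Real.exp_le_exp.mpr ?_)
        nlinarith [hma j]
      · refine le_trans (min_le_right _ _) (Real.exp_le_exp.mpr ?_)
        nlinarith [haM j]
  have hFmeas : AEStronglyMeasurable F (gaussianReal 0 1) :=
    (Continuous.min (by fun_prop) (by fun_prop)).aestronglyMeasurable
  have step1 : ∫ ω, ⨅ j, Real.exp (a j * Z ω - a j ^ 2 / 2) ∂P = ∫ z, F z ∂(gaussianReal 0 1) := by
    rw [← hZ, integral_map hZmeas.aemeasurable (hZ ▸ hFmeas)]
    exact integral_congr_ae (Eventually.of_forall fun ω => key (Z ω))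
  rw [step1]
  -- split the integral at c = (m + M)/2
  set c : ℝ := (m + M) / 2 with hc
  have hFint : Integrable F (gaussianReal 0 1) := by
    have := (tilt_integrable m).inf (tilt_integrable M)
    exact this
  have hsplit : ∫ z in Iic c, F z ∂(gaussianReal 0 1)
      + ∫ z in Ioi c, F z ∂(gaussianReal 0 1) = ∫ z, F z ∂(gaussianReal 0 1) := by
    have := integral_add_compl (measurableSet_Iic (a := c)) hFint
    rwa [compl_Iic] at this
  have hIic : ∫ z in Iic c, F z ∂(gaussianReal 0 1)
      = ∫ z in Iic c, rexp (M * z - M ^ 2 / 2) ∂(gaussianReal 0 1) := by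
    refine setIntegral_congr_fun measurableSet_Iic fun z hz => ?_
    have hz' : z ≤ c := hz
    exact min_eq_right (Real.exp_le_exp.mpr (by rw [hc] at hz'; nlinarith))
  have hIoi : ∫ z in Ioi c, F z ∂(gaussianReal 0 1)
      = ∫ z in Ioi c, rexp (m * z - m ^ 2 / 2) ∂(gaussianReal 0 1) := by
    refine setIntegral_congr_fun measurableSet_Ioi fun z hz => ?_
    have hz' : c < z := hz
    exact min_eq_left (Real.exp_le_exp.mpr (by rw [hc] at hz'; nlinarith))
  set t : ℝ := (M - m) / 2 with ht
  have hpiece1 : ∫ z in Iic c, F z ∂(gaussianReal 0 1)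
      = ((gaussianReal 0 1) (Ioi t)).toReal := by
    rw [hIic, tilt_setIntegral M measurableSet_Iic, gauss_shift]
    have : c - M = -t := by rw [hc, ht]; ring
    rw [this, gauss_symm]
  have hpiece2 : ∫ z in Ioi c, F z ∂(gaussianReal 0 1)
      = ((gaussianReal 0 1) (Ioi t)).toReal := by
    rw [hIoi, tilt_setIntegral m measurableSet_Ioi, gauss_shift_Ioi]
    congr 2
    rw [hc, ht]; ring
  have hsum := gauss_split t
  rw [← hsplit, hpiece1, hpiece2]
  linarith
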